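/- Let C be a nodal curve with marked smooth point σ(0), and let Z and Z' be 3-tails of C that are both free with respect to every tail in the nested set T²_{γ,γ'} of 2-tails associated to (C_γ, C_{γ'}), with C_γ ∪ C_{γ'} ⊆ Z ∧ Z' and σ(0) ∈ Z^c ∧ (Z')^c. Then Z ∧ Z' is a 3-tail of C that is free with respect to every tail of T²_{γ,γ'}. -/

import Mathlib

open Finset

/-- A combinatorial model of a nodal curve: `V` is the set of irreducible
components, `N` the set of nodes, `ends e` the (one or two) components through
the node `e`, `gen v` the geometric genus of the component `v`, and `base` the
component containing the marked smooth point `σ(0)`. -/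
structure NodalGraph where
  V : Type
  N : Type
  [fV : Fintype V]
  [dV : DecidableEq V]
  [fN : Fintype N]
  [dN : DecidableEq N]
  ends : N → V × V
  gen : V → ℕ
  base : V

attribute [instance] NodalGraph.fV NodalGraph.dV NodalGraph.fN NodalGraph.dN

namespace NodalGraph

variable (G : NodalGraph)

/-- Two components are adjacent if some node lies on both. -/
def Adj (a b : G.V) : Prop := ∃ e, G.ends e = (a, b) ∨ G.ends e = (b, a)

/-- The set of terminal points of a subcurve `Z`, i.e. the nodes in `Z ∩ Zᶜ`. -/
def Term (Z : Finset G.V) : Finset G.N :=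
  univ.filter (fun e =>
    ((G.ends e).1 ∈ Z ∧ (G.ends e).2 ∉ Z) ∨ ((G.ends e).1 ∉ Z ∧ (G.ends e).2 ∈ Z))

/-- `k_Z`, the number of terminal points of `Z`. -/
def k (Z : Finset G.V) : ℕ := (G.Term Z).card

/-- A (nonempty) subcurve is connected. -/
def ConnSub (Z : Finset G.V) : Prop :=
  Z.Nonempty ∧ ∀ u ∈ Z, ∀ v ∈ Z,
    Relation.ReflTransGen (fun a b => a ∈ Z ∧ b ∈ Z ∧ G.Adj a b) u v

/-- The whole curve is connected. -/
def Connected : Prop := G.ConnSub univ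

/-- A tail: a proper subcurve `Z` with both `Z` and `Zᶜ` connected. -/
def IsTail (Z : Finset G.V) : Prop := Z ≠ univ ∧ G.ConnSub Z ∧ G.ConnSub Zᶜ

/-- A `m`-tail: a tail with `k_Z = m`. -/
def IsKTail (Z : Finset G.V) (m : ℕ) : Prop := G.IsTail Z ∧ G.k Z = m

/-- The node `e` lies on the component `v`. -/
def onComp (e : G.N) (v : G.V) : Prop := (G.ends e).1 = v ∨ (G.ends e).2 = v

/-- The node `e`, as a point of the curve, lies on the subcurve `Z`. -/
def nodeOn (e : G.N) (Z : Finset G.V) : Prop := (G.ends e).1 ∈ Z ∨ (G.ends e).2 ∈ Z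

/-- The subcurve `Z` crosses the node `e`: both branches of `e` lie in `Z`. -/
def crosses (Z : Finset G.V) (e : G.N) : Prop := (G.ends e).1 ∈ Z ∧ (G.ends e).2 ∈ Z

/-- `Z ≺ Z'`: strict inclusion with disjoint terminal points. -/
def prec (Z Z' : Finset G.V) : Prop := Z ⊂ Z' ∧ G.Term Z ∩ G.Term Z' = ∅

/-- The pair `(Z, Z')` is free: disjoint terminal points. -/
def free (Z Z' : Finset G.V) : Prop := G.Term Z ∩ G.Term Z' = ∅

/-- The pair `(Z, Z')` is perfect. -/
def perfect (Z Z' : Finset G.V) : Prop := Z ⊆ Z' ∨ Z' ⊆ Z ∨ Zᶜ ⊆ Z' ∨ Z' ⊆ Zᶜ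

/-- `T¹_γ`: the nested set of 1-tails containing `C_γ` and avoiding `σ(0)`. -/
def T1 (γ : G.V) : Set (Finset G.V) := { Z | G.IsKTail Z 1 ∧ γ ∈ Z ∧ G.base ∉ Z }

/-- The defining condition for the 2-tails entering `T²_{γ,γ'}`. -/
def cond2 (γ γ' : G.V) (Z : Finset G.V) : Prop :=
  G.IsKTail Z 2 ∧ γ ∈ Z ∧ γ' ∈ Z ∧ G.base ∉ Z

/-- `W 0 ≺ W 1 ≺ ⋯ ≺ W (M-1)` is the nested set `T²_{γ,γ'}` of 2-tails:
each `W t` is minimal among the 2-tails `Z ⊇ C_γ ∪ C_γ'` with `σ(0) ∈ Zᶜ`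
and `W (t-1) ≺ Z` (starting from `W_{-1} = ∅`), and the chain is maximal. -/
def IsNested2 (γ γ' : G.V) (M : ℕ) (W : ℕ → Finset G.V) : Prop :=
  (∀ t < M, Minimal (fun Z => G.cond2 γ γ' Z ∧ G.prec (if t = 0 then ∅ else W (t - 1)) Z) (W t)) ∧
  ¬ ∃ Z, G.cond2 γ γ' Z ∧ G.prec (if M = 0 then ∅ else W (M - 1)) Z

/-- The set underlying a finite chain `W 0, …, W (M-1)`. -/
def chainSet (M : ℕ) (W : ℕ → Finset G.V) : Set (Finset G.V) := { Z | ∃ t < M, W t = Z }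

/-- The defining condition for the 3-tails entering `T³_{γ,γ'}`:
3-tails that are moreover free with respect to every member of `T²_{γ,γ'}`. -/
def cond3 (γ γ' : G.V) (T2 : Set (Finset G.V)) (Z : Finset G.V) : Prop :=
  G.IsKTail Z 3 ∧ γ ∈ Z ∧ γ' ∈ Z ∧ G.base ∉ Z ∧ ∀ W ∈ T2, G.free Z W

/-- `W 0 ≺ ⋯ ≺ W (M-1)` is the nested set `T³_{γ,γ'}` of 3-tails (relative to
the set `T2` of nested 2-tails). -/
def IsNested3 (γ γ' : G.V) (T2 : Set (Finset G.V)) (M : ℕ) (W : ℕ → Finset G.V) : Prop :=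
  (∀ t < M, Minimal (fun Z => G.cond3 γ γ' T2 Z ∧ G.prec (if t = 0 then ∅ else W (t - 1)) Z) (W t)) ∧
  ¬ ∃ Z, G.cond3 γ γ' T2 Z ∧ G.prec (if M = 0 then ∅ else W (M - 1)) Z

end NodalGraph

namespace NodalGraph

variable {G : NodalGraph}

/-- reachability within a subset -/
def rch (G : NodalGraph) (S : Finset G.V) : G.V → G.V → Prop :=
  Relation.ReflTransGen (fun a b => a ∈ S ∧ b ∈ S ∧ G.Adj a b)

lemma connSub_def {S : Finset G.V} :
    G.ConnSub S ↔ S.Nonempty ∧ ∀ u ∈ S, ∀ v ∈ S, G.rch S u v := Iff.rfl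

lemma adj_symm {a b : G.V} (h : G.Adj a b) : G.Adj b a := by
  obtain ⟨e, he⟩ := h; exact ⟨e, he.symm⟩

lemma rch_mono {S T : Finset G.V} (hST : S ⊆ T) {u v : G.V} (h : G.rch S u v) :
    G.rch T u v := by
  refine Relation.ReflTransGen.mono ?_ _ _ h
  rintro a b ⟨ha, hb, hab⟩; exact ⟨hST ha, hST hb, hab⟩

lemma rch_symm {S : Finset G.V} {u v : G.V} (h : G.rch S u v) : G.rch S v u := by
  haveI : Std.Symm (fun a b : G.V => a ∈ S ∧ b ∈ S ∧ G.Adj a b) := ⟨by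
    rintro a b ⟨ha, hb, hab⟩; exact ⟨hb, ha, adj_symm hab⟩⟩
  exact Std.Symm.symm (r := Relation.ReflTransGen (fun a b : G.V => a ∈ S ∧ b ∈ S ∧ G.Adj a b)) _ _ h

lemma rch_trans {S : Finset G.V} {u v w : G.V} (h : G.rch S u v) (h' : G.rch S v w) :
    G.rch S u w := Relation.ReflTransGen.trans h h'

lemma connSub_union {A B : Finset G.V} (hA : G.ConnSub A) (hB : G.ConnSub B)
    {x : G.V} (hxA : x ∈ A) (hxB : x ∈ B) : G.ConnSub (A ∪ B) := by
  refine ⟨⟨x, by simp [hxA]⟩, ?_⟩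
  intro u hu v hv
  have key : ∀ w ∈ A ∪ B, G.rch (A ∪ B) w x := by
    intro w hw
    rcases Finset.mem_union.mp hw with h | h
    · exact rch_mono Finset.subset_union_left (hA.2 w h x hxA)
    · exact rch_mono Finset.subset_union_right (hB.2 w h x hxB)
  exact rch_trans (key u hu) (rch_symm (key v hv))

/-- the workhorse: a walk in `U` from inside `A` to outside `A` exits through
an edge, and the exit point is reachable within `U ∩ A`. -/
lemma reach_exit {U A : Finset G.V} {u v : G.V}
    (h : G.rch U u v) (hu : u ∈ A) (hv : v ∉ A) :
    ∃ x y e, x ∈ U ∧ x ∈ A ∧ y ∈ U ∧ y ∉ A ∧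
      (G.ends e = (x, y) ∨ G.ends e = (y, x)) ∧ G.rch (U ∩ A) u x := by
  have main : ∀ w, G.rch U u w →
      (w ∈ A ∧ G.rch (U ∩ A) u w) ∨
      (∃ x y e, x ∈ U ∧ x ∈ A ∧ y ∈ U ∧ y ∉ A ∧
        (G.ends e = (x, y) ∨ G.ends e = (y, x)) ∧ G.rch (U ∩ A) u x) := by
    intro w hw
    induction hw with
    | refl => exact Or.inl ⟨hu, Relation.ReflTransGen.refl⟩
    | tail hab hbc ih =>
      rename_i b c
      rcases ih with ⟨hbA, hreach⟩ | hfound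
      · obtain ⟨hbU, hcU, hadj⟩ := hbc
        by_cases hcA : c ∈ A
        · exact Or.inl ⟨hcA, hreach.tail ⟨by simp [hbU, hbA], by simp [hcU, hcA], hadj⟩⟩
        · obtain ⟨e, he⟩ := hadj
          exact Or.inr ⟨b, c, e, hbU, hbA, hcU, hcA, he, hreach⟩
      · exact Or.inr hfound
  rcases main v h with ⟨hvA, _⟩ | hfound
  · exact absurd hvA hv
  · exact hfound

lemma mem_Term_iff {A : Finset G.V} {e : G.N} :
    e ∈ G.Term A ↔ (((G.ends e).1 ∈ A ∧ (G.ends e).2 ∉ A) ∨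
      ((G.ends e).1 ∉ A ∧ (G.ends e).2 ∈ A)) := by
  simp [Term]

lemma Term_empty : G.Term (∅ : Finset G.V) = ∅ := by
  ext e; simp [mem_Term_iff]

lemma not_mem_Term_iff {A : Finset G.V} {e : G.N} :
    e ∉ G.Term A ↔ ((G.ends e).1 ∈ A ↔ (G.ends e).2 ∈ A) := by
  rw [mem_Term_iff]; tauto

lemma Term_inter_subset {A B : Finset G.V} :
    G.Term (A ∩ B) ⊆ G.Term A ∪ G.Term B := by
  intro e he
  rw [mem_Term_iff] at he
  simp only [Finset.mem_union, mem_Term_iff, Finset.mem_inter] at *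
  tauto

lemma Term_union_subset {A B : Finset G.V} :
    G.Term (A ∪ B) ⊆ G.Term A ∪ G.Term B := by
  intro e he
  rw [mem_Term_iff] at he
  simp only [Finset.mem_union, mem_Term_iff] at *
  tauto

end NodalGraph
namespace NodalGraph

variable {G : NodalGraph}

/-- part code of a vertex w.r.t. the pair `(Z, Z')`:
0 = both, 1 = only `Z`, 2 = only `Z'`, 3 = neither. -/
def pt (G : NodalGraph) (Z Z' : Finset G.V) (v : G.V) : ℕ :=
  if v ∈ Z then (if v ∈ Z' then 0 else 1) else (if v ∈ Z' then 2 else 3)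

/-- type code of an edge: `4 * min + max` of the part codes of its ends. -/
def ft (G : NodalGraph) (Z Z' : Finset G.V) (e : G.N) : ℕ :=
  4 * min (G.pt Z Z' (G.ends e).1) (G.pt Z Z' (G.ends e).2) +
    max (G.pt Z Z' (G.ends e).1) (G.pt Z Z' (G.ends e).2)

/-- the set of edges of a given type code. -/
def ES (G : NodalGraph) (Z Z' : Finset G.V) (c : ℕ) : Finset G.N :=
  Finset.univ.filter (fun e => G.ft Z Z' e = c)

section edges

variable {Z Z' : Finset G.V} {e : G.N}

lemma mem_ES_iff {c : ℕ} : e ∈ G.ES Z Z' c ↔ G.ft Z Z' e = c := by simp [ES]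

lemma ES_disjoint {c c' : ℕ} (h : c ≠ c') : Disjoint (G.ES Z Z' c) (G.ES Z Z' c') := by
  rw [Finset.disjoint_left]
  intro x hx hx'
  rw [mem_ES_iff] at hx hx'
  exact h (hx ▸ hx' ▸ rfl)

lemma mem_ES1_iff :
    e ∈ G.ES Z Z' 1 ↔
      (((G.ends e).1 ∈ Z ∧ (G.ends e).1 ∈ Z' ∧ (G.ends e).2 ∈ Z ∧ (G.ends e).2 ∉ Z') ∨
       ((G.ends e).2 ∈ Z ∧ (G.ends e).2 ∈ Z' ∧ (G.ends e).1 ∈ Z ∧ (G.ends e).1 ∉ Z')) := by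
  by_cases hx : (G.ends e).1 ∈ Z <;> by_cases hx' : (G.ends e).1 ∈ Z' <;>
    by_cases hy : (G.ends e).2 ∈ Z <;> by_cases hy' : (G.ends e).2 ∈ Z' <;>
    simp [mem_ES_iff, ft, pt, hx, hx', hy, hy']

lemma mem_ES2_iff :
    e ∈ G.ES Z Z' 2 ↔
      (((G.ends e).1 ∈ Z ∧ (G.ends e).1 ∈ Z' ∧ (G.ends e).2 ∉ Z ∧ (G.ends e).2 ∈ Z') ∨
       ((G.ends e).2 ∈ Z ∧ (G.ends e).2 ∈ Z' ∧ (G.ends e).1 ∉ Z ∧ (G.ends e).1 ∈ Z')) := by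
  by_cases hx : (G.ends e).1 ∈ Z <;> by_cases hx' : (G.ends e).1 ∈ Z' <;>
    by_cases hy : (G.ends e).2 ∈ Z <;> by_cases hy' : (G.ends e).2 ∈ Z' <;>
    simp [mem_ES_iff, ft, pt, hx, hx', hy, hy']

lemma mem_ES3_iff :
    e ∈ G.ES Z Z' 3 ↔
      (((G.ends e).1 ∈ Z ∧ (G.ends e).1 ∈ Z' ∧ (G.ends e).2 ∉ Z ∧ (G.ends e).2 ∉ Z') ∨
       ((G.ends e).2 ∈ Z ∧ (G.ends e).2 ∈ Z' ∧ (G.ends e).1 ∉ Z ∧ (G.ends e).1 ∉ Z')) := by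
  by_cases hx : (G.ends e).1 ∈ Z <;> by_cases hx' : (G.ends e).1 ∈ Z' <;>
    by_cases hy : (G.ends e).2 ∈ Z <;> by_cases hy' : (G.ends e).2 ∈ Z' <;>
    simp [mem_ES_iff, ft, pt, hx, hx', hy, hy']

lemma mem_ES6_iff :
    e ∈ G.ES Z Z' 6 ↔
      (((G.ends e).1 ∈ Z ∧ (G.ends e).1 ∉ Z' ∧ (G.ends e).2 ∉ Z ∧ (G.ends e).2 ∈ Z') ∨
       ((G.ends e).2 ∈ Z ∧ (G.ends e).2 ∉ Z' ∧ (G.ends e).1 ∉ Z ∧ (G.ends e).1 ∈ Z')) := by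
  by_cases hx : (G.ends e).1 ∈ Z <;> by_cases hx' : (G.ends e).1 ∈ Z' <;>
    by_cases hy : (G.ends e).2 ∈ Z <;> by_cases hy' : (G.ends e).2 ∈ Z' <;>
    simp [mem_ES_iff, ft, pt, hx, hx', hy, hy']

lemma mem_ES7_iff :
    e ∈ G.ES Z Z' 7 ↔
      (((G.ends e).1 ∈ Z ∧ (G.ends e).1 ∉ Z' ∧ (G.ends e).2 ∉ Z ∧ (G.ends e).2 ∉ Z') ∨
       ((G.ends e).2 ∈ Z ∧ (G.ends e).2 ∉ Z' ∧ (G.ends e).1 ∉ Z ∧ (G.ends e).1 ∉ Z')) := by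
  by_cases hx : (G.ends e).1 ∈ Z <;> by_cases hx' : (G.ends e).1 ∈ Z' <;>
    by_cases hy : (G.ends e).2 ∈ Z <;> by_cases hy' : (G.ends e).2 ∈ Z' <;>
    simp [mem_ES_iff, ft, pt, hx, hx', hy, hy']

lemma mem_ES11_iff :
    e ∈ G.ES Z Z' 11 ↔
      ((((G.ends e).1 ∉ Z ∧ (G.ends e).1 ∈ Z' ∧ (G.ends e).2 ∉ Z ∧ (G.ends e).2 ∉ Z') ∨
       ((G.ends e).2 ∉ Z ∧ (G.ends e).2 ∈ Z' ∧ (G.ends e).1 ∉ Z ∧ (G.ends e).1 ∉ Z'))) := by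
  by_cases hx : (G.ends e).1 ∈ Z <;> by_cases hx' : (G.ends e).1 ∈ Z' <;>
    by_cases hy : (G.ends e).2 ∈ Z <;> by_cases hy' : (G.ends e).2 ∈ Z' <;>
    simp [mem_ES_iff, ft, pt, hx, hx', hy, hy']

lemma Term_Z_decomp :
    G.Term Z = G.ES Z Z' 2 ∪ G.ES Z Z' 3 ∪ G.ES Z Z' 6 ∪ G.ES Z Z' 7 := by
  ext e
  by_cases hx : (G.ends e).1 ∈ Z <;> by_cases hx' : (G.ends e).1 ∈ Z' <;>
    by_cases hy : (G.ends e).2 ∈ Z <;> by_cases hy' : (G.ends e).2 ∈ Z' <;>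
    simp [mem_Term_iff, mem_ES_iff, ft, pt, hx, hx', hy, hy']

lemma Term_Z'_decomp :
    G.Term Z' = G.ES Z Z' 1 ∪ G.ES Z Z' 3 ∪ G.ES Z Z' 6 ∪ G.ES Z Z' 11 := by
  ext e
  by_cases hx : (G.ends e).1 ∈ Z <;> by_cases hx' : (G.ends e).1 ∈ Z' <;>
    by_cases hy : (G.ends e).2 ∈ Z <;> by_cases hy' : (G.ends e).2 ∈ Z' <;>
    simp [mem_Term_iff, mem_ES_iff, ft, pt, hx, hx', hy, hy']

lemma Term_inter_decomp :
    G.Term (Z ∩ Z') = G.ES Z Z' 1 ∪ G.ES Z Z' 2 ∪ G.ES Z Z' 3 := by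
  ext e
  by_cases hx : (G.ends e).1 ∈ Z <;> by_cases hx' : (G.ends e).1 ∈ Z' <;>
    by_cases hy : (G.ends e).2 ∈ Z <;> by_cases hy' : (G.ends e).2 ∈ Z' <;>
    simp [mem_Term_iff, mem_ES_iff, ft, pt, hx, hx', hy, hy']

lemma Term_un_decomp :
    G.Term (Z ∪ Z') = G.ES Z Z' 3 ∪ G.ES Z Z' 7 ∪ G.ES Z Z' 11 := by
  ext e
  by_cases hx : (G.ends e).1 ∈ Z <;> by_cases hx' : (G.ends e).1 ∈ Z' <;>
    by_cases hy : (G.ends e).2 ∈ Z <;> by_cases hy' : (G.ends e).2 ∈ Z' <;>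
    simp [mem_Term_iff, mem_ES_iff, ft, pt, hx, hx', hy, hy']

lemma card_union4 {A B C D : Finset G.N} (hAB : Disjoint A B) (hAC : Disjoint A C)
    (hAD : Disjoint A D) (hBC : Disjoint B C) (hBD : Disjoint B D) (hCD : Disjoint C D) :
    (A ∪ B ∪ C ∪ D).card = A.card + B.card + C.card + D.card := by
  rw [Finset.card_union_of_disjoint, Finset.card_union_of_disjoint,
    Finset.card_union_of_disjoint hAB]
  · exact Finset.disjoint_union_left.mpr ⟨hAC, hBC⟩
  · exact Finset.disjoint_union_left.mpr ⟨Finset.disjoint_union_left.mpr ⟨hAD, hBD⟩, hCD⟩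

lemma card_union3 {A B C : Finset G.N} (hAB : Disjoint A B) (hAC : Disjoint A C)
    (hBC : Disjoint B C) :
    (A ∪ B ∪ C).card = A.card + B.card + C.card := by
  rw [Finset.card_union_of_disjoint, Finset.card_union_of_disjoint hAB]
  exact Finset.disjoint_union_left.mpr ⟨hAC, hBC⟩

end edges

end NodalGraph
namespace NodalGraph

variable {G : NodalGraph}

lemma mem_Term_of {A : Finset G.V} {e : G.N} {x y : G.V}
    (hxy : G.ends e = (x, y) ∨ G.ends e = (y, x)) (hx : x ∈ A) (hy : y ∉ A) :
    e ∈ G.Term A := by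
  rcases hxy with h | h <;> rw [mem_Term_iff, h] <;> simp [hx, hy]

lemma not_mem_Term_of {A : Finset G.V} {e : G.N} {x y : G.V}
    (hxy : G.ends e = (x, y) ∨ G.ends e = (y, x)) (hx : x ∈ A) (hy : y ∈ A) :
    e ∉ G.Term A := by
  rcases hxy with h | h <;> rw [mem_Term_iff, h] <;> simp [hx, hy]

/-- identify ends of a common edge across two descriptions, separated by `A`. -/
lemma end_eq {A : Finset G.V} {e : G.N} {x y p q : G.V}
    (h1 : G.ends e = (x, y) ∨ G.ends e = (y, x))
    (h2 : G.ends e = (p, q) ∨ G.ends e = (q, p))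
    (hx : x ∈ A) (hp : p ∈ A) (hy : y ∉ A) (hq : q ∉ A) : x = p ∧ y = q := by
  rcases h1 with h1 | h1 <;> rcases h2 with h2 | h2 <;>
    rw [h1] at h2 <;> injection h2 with e1 e2 <;> subst_vars <;>
    first | exact ⟨rfl, rfl⟩ | exact absurd hx hq | exact absurd hp hy

/-- an edge with an end in `A` differs from an edge with no end in `A`. -/
lemma edge_ne {A : Finset G.V} {e e' : G.N} {x y p q : G.V}
    (h1 : G.ends e = (x, y) ∨ G.ends e = (y, x))
    (h2 : G.ends e' = (p, q) ∨ G.ends e' = (q, p))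
    (hx : x ∈ A) (hp : p ∉ A) (hq : q ∉ A) : e ≠ e' := by
  intro h; subst h
  rcases h1 with h1 | h1 <;> rcases h2 with h2 | h2 <;>
    rw [h1] at h2 <;> injection h2 with e1 e2 <;> subst_vars <;>
    first | exact absurd hx hp | exact absurd hx hq

lemma k_pair {Y : Finset G.V} {f1 f2 : G.N} (h : G.Term Y = {f1, f2}) (hne : f1 ≠ f2) :
    G.k Y = 2 := by rw [k, h]; exact Finset.card_pair hne

/-- **Core candidate construction.**  If `W` is a connected subcurve with
connected complement and exactly two terminal points, free with respect to a
"2-tail-like" `T` through `γ, γ'` avoiding `b₀`, and `W ⊄ T`, then `W ∩ T` is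
again such a subcurve, strictly smaller than `W`. -/
lemma core {W T : Finset G.V} {γ γ' b₀ : G.V} {f1 f2 : G.N}
    (hTconn : G.ConnSub T) (hTc : G.ConnSub Tᶜ)
    (hTermT : G.Term T = {f1, f2}) (hf12 : f1 ≠ f2)
    (hWconn : G.ConnSub W) (hWc : G.ConnSub Wᶜ) (hkW : G.k W = 2)
    (_hfree : G.Term W ∩ G.Term T = ∅)
    (hγW : γ ∈ W) (hγT : γ ∈ T) (hγ'W : γ' ∈ W) (hγ'T : γ' ∈ T)
    (hbW : b₀ ∉ W) (hbT : b₀ ∉ T)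
    (hnsub : ¬ W ⊆ T) :
    ∃ Y, G.ConnSub Y ∧ G.ConnSub Yᶜ ∧ G.k Y = 2 ∧ γ ∈ Y ∧ γ' ∈ Y ∧ b₀ ∉ Y ∧
      G.Term Y ⊆ G.Term W ∪ G.Term T ∧ Y ⊆ W ∧ Y ≠ W ∧ W ∩ T ⊆ Y := by
  obtain ⟨τ, hτW, hτT⟩ : ∃ τ, τ ∈ W ∧ τ ∉ T := by
    by_contra h; push_neg at h; exact hnsub h
  by_cases hTW : T ⊆ W
  · -- candidate `T` itself
    refine ⟨T, hTconn, hTc, k_pair hTermT hf12, hγT, hγ'T, hbT, ?_, hTW, ?_, ?_⟩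
    · intro f hf; exact Finset.mem_union_right _ hf
    · intro h; exact hτT (h ▸ hτW)
    · exact Finset.inter_subset_right
  · obtain ⟨ρ, hρT, hρW⟩ : ∃ ρ, ρ ∈ T ∧ ρ ∉ W := by
      by_contra h; push_neg at h; exact hTW h
    -- the terminal point of `W` inside `T`
    obtain ⟨xT, yT, eT, hxTT, hxTW, hyTT, hyTW, heT, _⟩ :=
      reach_exit (hTconn.2 γ hγT ρ hρT) hγW hρW
    have heTW : eT ∈ G.Term W := mem_Term_of heT hxTW hyTW
    -- the terminal point of `W` outside `T`
    have hτTc : τ ∈ Tᶜ := Finset.mem_compl.mpr hτT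
    have hbTc : b₀ ∈ Tᶜ := Finset.mem_compl.mpr hbT
    obtain ⟨xO, yO, eO, hxOTc, hxOW, hyOTc, hyOW, heO, _⟩ :=
      reach_exit (hTc.2 τ hτTc b₀ hbTc) hτW hbW
    have hxOT : xO ∉ T := Finset.mem_compl.mp hxOTc
    have hyOT : yO ∉ T := Finset.mem_compl.mp hyOTc
    have heOW : eO ∈ G.Term W := mem_Term_of heO hxOW hyOW
    have heTO : eT ≠ eO := edge_ne (A := T) heT heO hxTT hxOT hyOT
    -- `Term W = {eT, eO}`
    have hTermW : G.Term W = {eT, eO} := by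
      refine (Finset.eq_of_subset_of_card_le ?_ ?_).symm
      · intro f hf
        rcases Finset.mem_insert.mp hf with h | h
        · exact h ▸ heTW
        · exact (Finset.mem_singleton.mp h) ▸ heOW
      · rw [show (G.Term W).card = 2 from hkW]
        exact le_of_eq (Finset.card_pair heTO).symm
    -- the "in" terminal point of `T` (both ends in `W`)
    obtain ⟨x1, y1, g, hx1W, hx1T, hy1W, hy1T, hg, _⟩ :=
      reach_exit (hWconn.2 γ hγW τ hτW) hγT hτT
    have hgT : g ∈ G.Term T := mem_Term_of hg hx1T hy1T
    -- the "out" terminal point of `T` (both ends outside `W`)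
    have hρWc : ρ ∈ Wᶜ := Finset.mem_compl.mpr hρW
    have hbWc : b₀ ∈ Wᶜ := Finset.mem_compl.mpr hbW
    obtain ⟨x2, y2, g', hx2Wc, hx2T, hy2Wc, hy2T, hg', _⟩ :=
      reach_exit (hWc.2 ρ hρWc b₀ hbWc) hρT hbT
    have hx2W : x2 ∉ W := Finset.mem_compl.mp hx2Wc
    have hy2W : y2 ∉ W := Finset.mem_compl.mp hy2Wc
    have hg'T : g' ∈ G.Term T := mem_Term_of hg' hx2T hy2T
    have hgg' : g ≠ g' := edge_ne (A := W) hg hg' hx1W hx2W hy2W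
    -- `Term T = {g, g'}`
    have hTermT' : G.Term T = {g, g'} := by
      refine (Finset.eq_of_subset_of_card_le ?_ ?_).symm
      · intro f hf
        rcases Finset.mem_insert.mp hf with h | h
        · exact h ▸ hgT
        · exact (Finset.mem_singleton.mp h) ▸ hg'T
      · rw [hTermT]
        rw [Finset.card_pair hf12]
        exact le_of_eq (Finset.card_pair hgg').symm
    -- the candidate
    set Y : Finset G.V := W ∩ T with hY
    have hYW : Y ⊆ W := Finset.inter_subset_left
    have hmemY : ∀ {v}, v ∈ Y ↔ v ∈ W ∧ v ∈ T := by
      intro v; exact Finset.mem_inter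
    have hγY : γ ∈ Y := hmemY.mpr ⟨hγW, hγT⟩
    have hγ'Y : γ' ∈ Y := hmemY.mpr ⟨hγ'W, hγ'T⟩
    have hbY : b₀ ∉ Y := fun h => hbW (hmemY.mp h).1
    have hy1Y : y1 ∉ Y := fun h => hy1T (hmemY.mp h).2
    -- every point of `Y` reaches `x1` inside `Y`
    have hhub : ∀ u ∈ Y, G.rch Y u x1 := by
      intro u hu
      obtain ⟨xu, yu, gu, hxuW, hxuT, hyuW, hyuT, hgu, hrch⟩ :=
        reach_exit (hWconn.2 u ((hmemY.mp hu).1) τ hτW) ((hmemY.mp hu).2) hτT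
      have hguT : gu ∈ G.Term T := mem_Term_of hgu hxuT hyuT
      have hgug : gu = g := by
        rw [hTermT'] at hguT
        rcases Finset.mem_insert.mp hguT with h | h
        · exact h
        · exfalso
          rw [Finset.mem_singleton.mp h] at hgu
          exact hx2W ((end_eq (A := T) hgu hg' hxuT hx2T hyuT hy2T).1 ▸ hxuW)
      rw [hgug] at hgu
      have hxux1 : xu = x1 := (end_eq (A := T) hgu hg hxuT hx1T hyuT hy1T).1
      exact hxux1 ▸ hrch
    have hYconn : G.ConnSub Y := by
      refine ⟨⟨γ, hγY⟩, fun u hu v hv => rch_trans (hhub u hu) (rch_symm (hhub v hv))⟩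
    -- Term Y = {eT, g}
    have heTY : eT ∈ G.Term Y := by
      refine mem_Term_of heT (hmemY.mpr ⟨hxTW, hxTT⟩) ?_
      intro h; exact hyTW (hmemY.mp h).1
    have hgY : g ∈ G.Term Y := by
      refine mem_Term_of hg (hmemY.mpr ⟨hx1W, hx1T⟩) hy1Y
    have heTg : eT ≠ g :=
      (edge_ne (A := Tᶜ) (Or.symm hg) heT (Finset.mem_compl.mpr hy1T)
        (fun h => (Finset.mem_compl.mp h) hxTT) (fun h => (Finset.mem_compl.mp h) hyTT)).symm
    have hTermY : G.Term Y = {eT, g} := by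
      ext f
      constructor
      · intro hf
        rw [mem_Term_iff] at hf
        have inner : ∀ s t : G.V, s ∈ Y → t ∉ Y →
            (G.ends f = (s, t) ∨ G.ends f = (t, s)) → f = eT ∨ f = g := by
          intro s t hs ht hor
          obtain ⟨hsW, hsT⟩ := hmemY.mp hs
          by_cases htT : t ∈ T
          · have htW : t ∉ W := fun h => ht (hmemY.mpr ⟨h, htT⟩)
            have hfW : f ∈ G.Term W := mem_Term_of hor hsW htW
            rw [hTermW] at hfW
            rcases Finset.mem_insert.mp hfW with h | h
            · exact Or.inl h
            · exfalso
              rw [Finset.mem_singleton.mp h] at hor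
              exact hxOT ((end_eq (A := W) hor heO hsW hxOW htW hyOW).1 ▸ hsT)
          · have hfT : f ∈ G.Term T := mem_Term_of hor hsT htT
            rw [hTermT'] at hfT
            rcases Finset.mem_insert.mp hfT with h | h
            · exact Or.inr h
            · exfalso
              rw [Finset.mem_singleton.mp h] at hor
              exact hx2W ((end_eq (A := T) hor hg' hsT hx2T htT hy2T).1 ▸ hsW)
        rcases hf with ⟨h1, h2⟩ | ⟨h1, h2⟩
        · have := inner _ _ h1 h2 (Or.inl rfl)
          simpa using this
        · have := inner _ _ h2 h1 (Or.inr rfl)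
          simpa using this
      · intro hf
        rcases Finset.mem_insert.mp hf with h | h
        · exact h ▸ heTY
        · exact (Finset.mem_singleton.mp h) ▸ hgY
    have hWcYc : ∀ {v : G.V}, v ∈ Wᶜ → v ∈ Yᶜ := by
      intro v hv
      exact Finset.mem_compl.mpr (fun h => (Finset.mem_compl.mp hv) (hYW h))
    -- complement of Y is connected
    have hsubWT : W ∩ Tᶜ ⊆ Yᶜ := by
      intro v hv
      obtain ⟨hvW, hvTc⟩ := Finset.mem_inter.mp hv
      exact Finset.mem_compl.mpr (fun hY => (Finset.mem_compl.mp hvTc) (hmemY.mp hY).2)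
    have hYc : G.ConnSub Yᶜ := by
      -- every point of W outside T reaches y1 within W ∩ Tᶜ
      have hWT : ∀ w ∈ W, w ∉ T → G.rch (W ∩ Tᶜ) w y1 := by
        intro w hwW hwT
        obtain ⟨xw, yw, gw, hxwW, hxwTc, hywW, hywTc, hgw, hrch⟩ :=
          reach_exit (hWconn.2 w hwW γ hγW) (Finset.mem_compl.mpr hwT)
            (fun h => (Finset.mem_compl.mp h) hγT)
        have hxwT : xw ∉ T := Finset.mem_compl.mp hxwTc
        have hywT : yw ∈ T := by
          by_contra h; exact (hywTc (Finset.mem_compl.mpr h))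
        have hgwT : gw ∈ G.Term T := mem_Term_of (Or.symm hgw) hywT hxwT
        have hgwg : gw = g := by
          rw [hTermT'] at hgwT
          rcases Finset.mem_insert.mp hgwT with h | h
          · exact h
          · exfalso
            rw [Finset.mem_singleton.mp h] at hgw
            exact hx2W ((end_eq (A := T) (Or.symm hgw) hg' hywT hx2T hxwT hy2T).1 ▸ hywW)
        rw [hgwg] at hgw
        have : yw = x1 ∧ xw = y1 :=
          end_eq (A := T) (Or.symm hgw) hg hywT hx1T hxwT hy1T
        exact this.2 ▸ hrch
      have hroute : ∀ u ∈ Yᶜ, G.rch Yᶜ u b₀ := by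
        intro u hu
        have huY : u ∉ Y := Finset.mem_compl.mp hu
        by_cases huW : u ∈ W
        · have huT : u ∉ T := fun h => huY (hmemY.mpr ⟨huW, h⟩)
          have r1 : G.rch Yᶜ u y1 := rch_mono hsubWT (hWT u huW huT)
          have r2 : G.rch Yᶜ y1 xO := rch_mono hsubWT (rch_symm (hWT xO hxOW hxOT))
          have hxOYc : xO ∈ Yᶜ := Finset.mem_compl.mpr (fun h => hxOT (hmemY.mp h).2)
          have hyOYc : yO ∈ Yᶜ := hWcYc (Finset.mem_compl.mpr hyOW)
          have r3 : G.rch Yᶜ xO yO :=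
            Relation.ReflTransGen.single ⟨hxOYc, hyOYc, ⟨eO, heO⟩⟩
          have r4 : G.rch Yᶜ yO b₀ :=
            rch_mono (fun v hv => hWcYc hv) (hWc.2 yO (Finset.mem_compl.mpr hyOW) b₀ hbWc)
          exact rch_trans r1 (rch_trans r2 (rch_trans r3 r4))
        · exact rch_mono (fun v hv => hWcYc hv) (hWc.2 u (Finset.mem_compl.mpr huW) b₀ hbWc)
      refine ⟨⟨b₀, Finset.mem_compl.mpr hbY⟩,
        fun u hu v hv => rch_trans (hroute u hu) (rch_symm (hroute v hv))⟩
    refine ⟨Y, hYconn, hYc, k_pair hTermY heTg, hγY, hγ'Y, hbY, ?_, hYW, ?_, ?_⟩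
    · rw [hTermY]
      intro f hf
      rcases Finset.mem_insert.mp hf with h | h
      · exact Finset.mem_union_left _ (h ▸ heTW)
      · exact Finset.mem_union_right _ ((Finset.mem_singleton.mp h) ▸ hgT)
    · intro h
      exact hy1Y (h ▸ hy1W)
    · exact fun v hv => hv

end NodalGraph
namespace NodalGraph

variable {G : NodalGraph}

/-- **Chain contradiction.** If some 2-tail-like subcurve `T` through `γ, γ'`
avoiding the base has exactly two terminal points, both lying on `Term Z ∪ Term Z'`,
then the maximality of the nested chain `T²_{γ,γ'}` is contradicted. -/
lemma chain_false {Z Z' : Finset G.V} {γ γ' : G.V}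
    {M2 : ℕ} {W2 : ℕ → Finset G.V} (h2 : G.IsNested2 γ γ' M2 W2)
    (hfZ : ∀ Wt ∈ G.chainSet M2 W2, G.free Z Wt)
    (hfZ' : ∀ Wt ∈ G.chainSet M2 W2, G.free Z' Wt)
    {T : Finset G.V} {f1 f2 : G.N}
    (hTconn : G.ConnSub T) (hTc : G.ConnSub Tᶜ)
    (hTermT : G.Term T = {f1, f2}) (hf12 : f1 ≠ f2)
    (hTsub : G.Term T ⊆ G.Term Z ∪ G.Term Z')
    (hγT : γ ∈ T) (hγ'T : γ' ∈ T) (hbT : G.base ∉ T) :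
    False := by
  have hTuniv : T ≠ Finset.univ := fun h => hbT (h ▸ Finset.mem_univ _)
  have hkT : G.k T = 2 := k_pair hTermT hf12
  have hcond2T : G.cond2 γ γ' T := ⟨⟨⟨hTuniv, hTconn, hTc⟩, hkT⟩, hγT, hγ'T, hbT⟩
  -- chain members are free with respect to anything terminating on Term Z ∪ Term Z'
  have hfT : ∀ A, G.Term A ⊆ G.Term Z ∪ G.Term Z' →
      ∀ V ∈ G.chainSet M2 W2, G.Term V ∩ G.Term A = ∅ := by
    intro A hA V hV
    rw [Finset.eq_empty_iff_forall_notMem]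
    intro f hf
    obtain ⟨hf1, hf2⟩ := Finset.mem_inter.mp hf
    rcases Finset.mem_union.mp (hA hf2) with h | h
    · have := hfZ V hV
      rw [free, Finset.eq_empty_iff_forall_notMem] at this
      exact this f (Finset.mem_inter.mpr ⟨h, hf1⟩)
    · have := hfZ' V hV
      rw [free, Finset.eq_empty_iff_forall_notMem] at this
      exact this f (Finset.mem_inter.mpr ⟨h, hf1⟩)
  -- every member of the chain is contained in T
  have key : ∀ t, t < M2 → W2 t ⊆ T := by
    intro t
    induction t using Nat.strong_induction_on with
    | _ t ih =>
      intro ht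
      have hmin := h2.1 t ht
      obtain ⟨⟨⟨⟨hWuniv, hWconn, hWc⟩, hkW⟩, hγW, hγ'W, hbW⟩, hprec⟩ := hmin.1
      have hVT : (if t = 0 then (∅ : Finset G.V) else W2 (t-1)) ⊆ T := by
        by_cases h0 : t = 0
        · simp [h0]
        · simp only [if_neg h0]
          exact ih (t-1) (by omega) (by omega)
      have hVW := hprec.1
      have hVTermW : G.Term (if t = 0 then (∅ : Finset G.V) else W2 (t-1)) ∩
          G.Term (W2 t) = ∅ := hprec.2
      have hVTermfree : ∀ A, G.Term A ⊆ G.Term Z ∪ G.Term Z' →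
          G.Term (if t = 0 then (∅ : Finset G.V) else W2 (t-1)) ∩ G.Term A = ∅ := by
        intro A hA
        by_cases h0 : t = 0
        · simp [h0, Term_empty]
        · simp only [if_neg h0]
          exact hfT A hA (W2 (t-1)) ⟨t-1, by omega, rfl⟩
      by_contra hns
      have hWfreeT : G.Term (W2 t) ∩ G.Term T = ∅ := by
        rw [Finset.eq_empty_iff_forall_notMem]
        intro f hf
        obtain ⟨hfW, hfT'⟩ := Finset.mem_inter.mp hf
        rcases Finset.mem_union.mp (hTsub hfT') with h | h
        · have := hfZ (W2 t) ⟨t, ht, rfl⟩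
          rw [free, Finset.eq_empty_iff_forall_notMem] at this
          exact this f (Finset.mem_inter.mpr ⟨h, hfW⟩)
        · have := hfZ' (W2 t) ⟨t, ht, rfl⟩
          rw [free, Finset.eq_empty_iff_forall_notMem] at this
          exact this f (Finset.mem_inter.mpr ⟨h, hfW⟩)
      obtain ⟨Y, hYconn, hYc, hkY, hγY, hγ'Y, hbY, hTermY, hYW, hYneW, hWTY⟩ :=
        core hTconn hTc hTermT hf12 hWconn hWc hkW hWfreeT
          hγW hγT hγ'W hγ'T hbW hbT hns
      have hYuniv : Y ≠ Finset.univ := fun h => hbY (h ▸ Finset.mem_univ _)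
      have hcond2Y : G.cond2 γ γ' Y := ⟨⟨⟨hYuniv, hYconn, hYc⟩, hkY⟩, hγY, hγ'Y, hbY⟩
      have hTermYne : (G.Term Y).Nonempty := by
        rw [← Finset.card_pos, show (G.Term Y).card = 2 from hkY]; omega
      have hVsubY : (if t = 0 then (∅ : Finset G.V) else W2 (t-1)) ⊆ Y := by
        intro v hv
        exact hWTY (Finset.mem_inter.mpr ⟨hVW.subset hv, hVT hv⟩)
      have hVneY : (if t = 0 then (∅ : Finset G.V) else W2 (t-1)) ≠ Y := by
        intro hEq
        obtain ⟨f, hf⟩ := hTermYne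
        have hfY := hf
        rw [← hEq] at hf
        rcases Finset.mem_union.mp (hTermY hfY) with h | h
        · rw [Finset.eq_empty_iff_forall_notMem] at hVTermW
          exact hVTermW f (Finset.mem_inter.mpr ⟨hf, h⟩)
        · have h2' := hVTermfree T hTsub
          rw [Finset.eq_empty_iff_forall_notMem] at h2'
          exact h2' f (Finset.mem_inter.mpr ⟨hf, h⟩)
      have hTermVY : G.Term (if t = 0 then (∅ : Finset G.V) else W2 (t-1)) ∩
          G.Term Y = ∅ := by
        rw [Finset.eq_empty_iff_forall_notMem]
        intro f hf
        obtain ⟨hfV, hfY⟩ := Finset.mem_inter.mp hf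
        rcases Finset.mem_union.mp (hTermY hfY) with h | h
        · rw [Finset.eq_empty_iff_forall_notMem] at hVTermW
          exact hVTermW f (Finset.mem_inter.mpr ⟨hfV, h⟩)
        · have h2' := hVTermfree T hTsub
          rw [Finset.eq_empty_iff_forall_notMem] at h2'
          exact h2' f (Finset.mem_inter.mpr ⟨hfV, h⟩)
      have hprecY : G.prec (if t = 0 then (∅ : Finset G.V) else W2 (t-1)) Y :=
        ⟨lt_of_le_of_ne hVsubY hVneY, hTermVY⟩
      have hle := hmin.2 ⟨hcond2Y, hprecY⟩ hYW
      exact hYneW (Finset.Subset.antisymm hYW hle)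
  -- final contradiction with maximality
  apply h2.2
  refine ⟨T, hcond2T, ?_, ?_⟩
  · -- strict inclusion
    have hsub : (if M2 = 0 then (∅ : Finset G.V) else W2 (M2-1)) ⊆ T := by
      by_cases h0 : M2 = 0
      · simp [h0]
      · simp only [if_neg h0]
        exact key (M2 - 1) (by omega)
    have hne : (if M2 = 0 then (∅ : Finset G.V) else W2 (M2-1)) ≠ T := by
      by_cases h0 : M2 = 0
      · simp only [if_pos h0]
        intro h
        exact absurd (h ▸ hγT) (Finset.notMem_empty γ)
      · simp only [if_neg h0]
        intro hEq
        have hmem : W2 (M2 - 1) ∈ G.chainSet M2 W2 := ⟨M2 - 1, by omega, rfl⟩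
        have hf1T : f1 ∈ G.Term T := by rw [hTermT]; simp
        have := hfT T hTsub (W2 (M2-1)) hmem
        rw [Finset.eq_empty_iff_forall_notMem] at this
        exact this f1 (Finset.mem_inter.mpr ⟨hEq ▸ hf1T, hf1T⟩)
    exact lt_of_le_of_ne hsub hne
  · by_cases h0 : M2 = 0
    · simp [h0, Term_empty]
    · simp only [if_neg h0]
      exact hfT T hTsub (W2 (M2-1)) ⟨M2 - 1, by omega, rfl⟩

end NodalGraph
namespace NodalGraph

variable {G : NodalGraph} {Z Z' : Finset G.V}

lemma mem_ES1_of {e : G.N} {x y : G.V} (hor : G.ends e = (x, y) ∨ G.ends e = (y, x))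
    (h1 : x ∈ Z) (h2 : x ∈ Z') (h3 : y ∈ Z) (h4 : y ∉ Z') : e ∈ G.ES Z Z' 1 := by
  rcases hor with h | h <;> rw [mem_ES1_iff, h] <;> simp [h1, h2, h3, h4]

lemma mem_ES2_of {e : G.N} {x y : G.V} (hor : G.ends e = (x, y) ∨ G.ends e = (y, x))
    (h1 : x ∈ Z) (h2 : x ∈ Z') (h3 : y ∉ Z) (h4 : y ∈ Z') : e ∈ G.ES Z Z' 2 := by
  rcases hor with h | h <;> rw [mem_ES2_iff, h] <;> simp [h1, h2, h3, h4]

lemma mem_ES7_of {e : G.N} {x y : G.V} (hor : G.ends e = (x, y) ∨ G.ends e = (y, x))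
    (h1 : x ∈ Z) (h2 : x ∉ Z') (h3 : y ∉ Z) (h4 : y ∉ Z') : e ∈ G.ES Z Z' 7 := by
  rcases hor with h | h <;> rw [mem_ES7_iff, h] <;> simp [h1, h2, h3, h4]

lemma mem_ES11_of {e : G.N} {x y : G.V} (hor : G.ends e = (x, y) ∨ G.ends e = (y, x))
    (h1 : x ∉ Z) (h2 : x ∈ Z') (h3 : y ∉ Z) (h4 : y ∉ Z') : e ∈ G.ES Z Z' 11 := by
  rcases hor with h | h <;> rw [mem_ES11_iff, h] <;> simp [h1, h2, h3, h4]

lemma ES1_spec {e : G.N} (h : e ∈ G.ES Z Z' 1) :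
    ∃ p q, (G.ends e = (p, q) ∨ G.ends e = (q, p)) ∧ p ∈ Z ∧ p ∈ Z' ∧ q ∈ Z ∧ q ∉ Z' := by
  rw [mem_ES1_iff] at h
  rcases h with ⟨h1, h2, h3, h4⟩ | ⟨h1, h2, h3, h4⟩
  · exact ⟨_, _, Or.inl rfl, h1, h2, h3, h4⟩
  · exact ⟨_, _, Or.inr rfl, h1, h2, h3, h4⟩

lemma ES2_spec {e : G.N} (h : e ∈ G.ES Z Z' 2) :
    ∃ p q, (G.ends e = (p, q) ∨ G.ends e = (q, p)) ∧ p ∈ Z ∧ p ∈ Z' ∧ q ∉ Z ∧ q ∈ Z' := by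
  rw [mem_ES2_iff] at h
  rcases h with ⟨h1, h2, h3, h4⟩ | ⟨h1, h2, h3, h4⟩
  · exact ⟨_, _, Or.inl rfl, h1, h2, h3, h4⟩
  · exact ⟨_, _, Or.inr rfl, h1, h2, h3, h4⟩

lemma ES11_spec {e : G.N} (h : e ∈ G.ES Z Z' 11) :
    ∃ p q, (G.ends e = (p, q) ∨ G.ends e = (q, p)) ∧ p ∉ Z ∧ p ∈ Z' ∧ q ∉ Z ∧ q ∉ Z' := by
  rw [mem_ES11_iff] at h
  rcases h with ⟨h1, h2, h3, h4⟩ | ⟨h1, h2, h3, h4⟩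
  · exact ⟨_, _, Or.inl rfl, h1, h2, h3, h4⟩
  · exact ⟨_, _, Or.inr rfl, h1, h2, h3, h4⟩

/-- if there is a unique `P`–`Q` node, then `P = Z ∩ Z'` is connected. -/
lemma P_conn_of_ES1 {ea : G.N} (hZconn : G.ConnSub Z) (hES1 : G.ES Z Z' 1 = {ea})
    {γ : G.V} (hγ : γ ∈ Z ∩ Z') : G.ConnSub (Z ∩ Z') := by
  obtain ⟨p, q, hor, hpZ, hpZ', hqZ, hqZ'⟩ := ES1_spec (hES1 ▸ Finset.mem_singleton_self ea)
  have hub : ∀ u ∈ Z ∩ Z', G.rch (Z ∩ Z') u p := by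
    intro u hu
    obtain ⟨huZ, huZ'⟩ := Finset.mem_inter.mp hu
    obtain ⟨x, y, e, hxZ, hxZ', hyZ, hyZ', he, hrch⟩ :=
      reach_exit (hZconn.2 u huZ q hqZ) huZ' hqZ'
    have heES : e ∈ G.ES Z Z' 1 := mem_ES1_of he hxZ hxZ' hyZ hyZ'
    have hee : e = ea := Finset.mem_singleton.mp (hES1 ▸ heES)
    rw [hee] at he
    have := end_eq (A := Z') he hor hxZ' hpZ' hyZ' hqZ'
    exact this.1 ▸ hrch
  exact ⟨⟨γ, hγ⟩, fun u hu v hv => rch_trans (hub u hu) (rch_symm (hub v hv))⟩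

/-- if there is a unique `P`–`R` node, then `P = Z ∩ Z'` is connected. -/
lemma P_conn_of_ES2 {eb : G.N} (hZ'conn : G.ConnSub Z') (hES2 : G.ES Z Z' 2 = {eb})
    {γ : G.V} (hγ : γ ∈ Z ∩ Z') : G.ConnSub (Z ∩ Z') := by
  obtain ⟨p, q, hor, hpZ, hpZ', hqZ, hqZ'⟩ := ES2_spec (hES2 ▸ Finset.mem_singleton_self eb)
  have hub : ∀ u ∈ Z ∩ Z', G.rch (Z ∩ Z') u p := by
    intro u hu
    obtain ⟨huZ, huZ'⟩ := Finset.mem_inter.mp hu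
    obtain ⟨x, y, e, hxZ', hxZ, hyZ', hyZ, he, hrch⟩ :=
      reach_exit (hZ'conn.2 u huZ' q hqZ') huZ hqZ
    have heES : e ∈ G.ES Z Z' 2 := mem_ES2_of he hxZ hxZ' hyZ hyZ'
    have hee : e = eb := Finset.mem_singleton.mp (hES2 ▸ heES)
    rw [hee] at he
    have := end_eq (A := Z) he hor hxZ hpZ hyZ hqZ
    have hx : G.rch (Z' ∩ Z) u p := this.1 ▸ hrch
    exact rch_mono (by rw [Finset.inter_comm]) hx
  exact ⟨⟨γ, hγ⟩, fun u hu v hv => rch_trans (hub u hu) (rch_symm (hub v hv))⟩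

/-- if there is a unique `R`–`S` node, then `S = (Z ∪ Z')ᶜ` is connected. -/
lemma S_conn_of_ES11 {er : G.N} (hZc : G.ConnSub Zᶜ) (hES11 : G.ES Z Z' 11 = {er})
    (hbZ : G.base ∉ Z) (hbZ' : G.base ∉ Z') {ρ : G.V} (hρZ : ρ ∉ Z) (hρZ' : ρ ∈ Z') :
    G.ConnSub (Z ∪ Z')ᶜ := by
  obtain ⟨p, q, hor, hpZ, hpZ', hqZ, hqZ'⟩ := ES11_spec (hES11 ▸ Finset.mem_singleton_self er)
  have hcompl : (Z ∪ Z')ᶜ = Zᶜ ∩ Z'ᶜ := by rw [Finset.compl_union]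
  have hub : ∀ u ∈ (Z ∪ Z')ᶜ, G.rch ((Z ∪ Z')ᶜ) u q := by
    intro u hu
    have huZ : u ∉ Z := fun h => (Finset.mem_compl.mp hu) (Finset.mem_union_left _ h)
    have huZ' : u ∉ Z' := fun h => (Finset.mem_compl.mp hu) (Finset.mem_union_right _ h)
    obtain ⟨x, y, e, hxZc, hxZ'c, hyZc, hyZ'c, he, hrch⟩ :=
      reach_exit (hZc.2 u (Finset.mem_compl.mpr huZ) ρ (Finset.mem_compl.mpr hρZ))
        (Finset.mem_compl.mpr huZ') (fun h => (Finset.mem_compl.mp h) hρZ')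
    have hxZ : x ∉ Z := Finset.mem_compl.mp hxZc
    have hxZ' : x ∉ Z' := Finset.mem_compl.mp hxZ'c
    have hyZ : y ∉ Z := Finset.mem_compl.mp hyZc
    have hyZ' : y ∈ Z' := by
      by_contra h; exact hyZ'c (Finset.mem_compl.mpr h)
    have heES : e ∈ G.ES Z Z' 11 := mem_ES11_of (Or.symm he) hyZ hyZ' hxZ hxZ'
    have hee : e = er := Finset.mem_singleton.mp (hES11 ▸ heES)
    rw [hee] at he
    have := end_eq (A := Z') (Or.symm he) hor hyZ' hpZ' hxZ' hqZ'
    have hx : G.rch (Zᶜ ∩ Z'ᶜ) u q := this.2 ▸ hrch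
    exact rch_mono (by rw [hcompl]) hx
  have hbmem : G.base ∈ (Z ∪ Z')ᶜ := by
    rw [Finset.mem_compl, Finset.mem_union]; tauto
  exact ⟨⟨G.base, hbmem⟩, fun u hu v hv => rch_trans (hub u hu) (rch_symm (hub v hv))⟩

end NodalGraph
/-- Lemma 2.3: the wedge of two `T²_{γ,γ'}`-free 3-tails
containing `C_γ ∪ C_{γ'}` and avoiding `σ(0)` is again a `T²_{γ,γ'}`-free
3-tail. -/
theorem wedge_of_three_tails
    (G : NodalGraph) (hconn : G.Connected) (γ γ' : G.V)
    (M2 : ℕ) (W2 : ℕ → Finset G.V) (h2 : G.IsNested2 γ γ' M2 W2)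
    (Z Z' : Finset G.V) (hZ : G.IsKTail Z 3) (hZ' : G.IsKTail Z' 3)
    (hfZ : ∀ Wt ∈ G.chainSet M2 W2, G.free Z Wt)
    (hfZ' : ∀ Wt ∈ G.chainSet M2 W2, G.free Z' Wt)
    (hγ : γ ∈ Z ∩ Z') (hγ' : γ' ∈ Z ∩ Z')
    (hb : G.base ∈ Zᶜ ∩ Z'ᶜ) :
    G.IsKTail (Z ∩ Z') 3 ∧ ∀ Wt ∈ G.chainSet M2 W2, G.free (Z ∩ Z') Wt := by
  classical
  obtain ⟨hγZ, hγZ'⟩ := Finset.mem_inter.mp hγ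
  obtain ⟨hγ'Z, hγ'Z'⟩ := Finset.mem_inter.mp hγ'
  have hbZ : G.base ∉ Z := Finset.mem_compl.mp (Finset.mem_inter.mp hb).1
  have hbZ' : G.base ∉ Z' := Finset.mem_compl.mp (Finset.mem_inter.mp hb).2
  -- the wedge is free with respect to every chain member, in general
  have hfreewedge : ∀ Wt ∈ G.chainSet M2 W2, G.free (Z ∩ Z') Wt := by
    intro Wt hWt
    rw [NodalGraph.free, Finset.eq_empty_iff_forall_notMem]
    intro f hf
    obtain ⟨hf1, hf2⟩ := Finset.mem_inter.mp hf
    rcases Finset.mem_union.mp (NodalGraph.Term_inter_subset hf1) with h | h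
    · have := hfZ Wt hWt
      rw [NodalGraph.free, Finset.eq_empty_iff_forall_notMem] at this
      exact this f (Finset.mem_inter.mpr ⟨h, hf2⟩)
    · have := hfZ' Wt hWt
      rw [NodalGraph.free, Finset.eq_empty_iff_forall_notMem] at this
      exact this f (Finset.mem_inter.mpr ⟨h, hf2⟩)
  refine ⟨?_, hfreewedge⟩
  by_cases hQ : Z ⊆ Z'
  · rw [Finset.inter_eq_left.mpr hQ]; exact hZ
  by_cases hR : Z' ⊆ Z
  · rw [Finset.inter_eq_right.mpr hR]; exact hZ'
  obtain ⟨ρQ, hρQZ, hρQZ'⟩ := Finset.not_subset.mp hQ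
  obtain ⟨ρR, hρRZ', hρRZ⟩ := Finset.not_subset.mp hR
  obtain ⟨⟨hZuniv, hZconn, hZc⟩, hkZ⟩ := hZ
  obtain ⟨⟨hZ'univ, hZ'conn, hZ'c⟩, hkZ'⟩ := hZ'
  -- nonemptiness of the four crucial edge classes
  have hES1ne : (G.ES Z Z' 1).Nonempty := by
    obtain ⟨x, y, e, hxZ, hxZ', hyZ, hyZ', he, -⟩ :=
      NodalGraph.reach_exit (hZconn.2 γ hγZ ρQ hρQZ) hγZ' hρQZ'
    exact ⟨e, NodalGraph.mem_ES1_of he hxZ hxZ' hyZ hyZ'⟩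
  have hES2ne : (G.ES Z Z' 2).Nonempty := by
    obtain ⟨x, y, e, hxZ', hxZ, hyZ', hyZ, he, -⟩ :=
      NodalGraph.reach_exit (hZ'conn.2 γ hγZ' ρR hρRZ') hγZ hρRZ
    exact ⟨e, NodalGraph.mem_ES2_of he hxZ hxZ' hyZ hyZ'⟩
  have hES7ne : (G.ES Z Z' 7).Nonempty := by
    obtain ⟨x, y, e, hxZ'c, hxZ, hyZ'c, hyZ, he, -⟩ :=
      NodalGraph.reach_exit (hZ'c.2 ρQ (Finset.mem_compl.mpr hρQZ') G.base
        (Finset.mem_compl.mpr hbZ')) hρQZ hbZ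
    exact ⟨e, NodalGraph.mem_ES7_of he hxZ (Finset.mem_compl.mp hxZ'c) hyZ
      (Finset.mem_compl.mp hyZ'c)⟩
  have hES11ne : (G.ES Z Z' 11).Nonempty := by
    obtain ⟨x, y, e, hxZc, hxZ', hyZc, hyZ', he, -⟩ :=
      NodalGraph.reach_exit (hZc.2 ρR (Finset.mem_compl.mpr hρRZ) G.base
        (Finset.mem_compl.mpr hbZ)) hρRZ' hbZ'
    exact ⟨e, NodalGraph.mem_ES11_of he (Finset.mem_compl.mp hxZc) hxZ'
      (Finset.mem_compl.mp hyZc) hyZ'⟩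
  have hn1 : 1 ≤ (G.ES Z Z' 1).card := Finset.card_pos.mpr hES1ne
  have hn2 : 1 ≤ (G.ES Z Z' 2).card := Finset.card_pos.mpr hES2ne
  have hn7 : 1 ≤ (G.ES Z Z' 7).card := Finset.card_pos.mpr hES7ne
  have hn11 : 1 ≤ (G.ES Z Z' 11).card := Finset.card_pos.mpr hES11ne
  -- the two counting identities k_Z = 3, k_Z' = 3
  have hcZ : (G.ES Z Z' 2).card + (G.ES Z Z' 3).card + (G.ES Z Z' 6).card +
      (G.ES Z Z' 7).card = 3 := by
    rw [NodalGraph.k, NodalGraph.Term_Z_decomp (Z' := Z'),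
      NodalGraph.card_union4 (NodalGraph.ES_disjoint (by norm_num))
        (NodalGraph.ES_disjoint (by norm_num)) (NodalGraph.ES_disjoint (by norm_num))
        (NodalGraph.ES_disjoint (by norm_num)) (NodalGraph.ES_disjoint (by norm_num))
        (NodalGraph.ES_disjoint (by norm_num))] at hkZ
    exact hkZ
  have hcZ' : (G.ES Z Z' 1).card + (G.ES Z Z' 3).card + (G.ES Z Z' 6).card +
      (G.ES Z Z' 11).card = 3 := by
    rw [NodalGraph.k, NodalGraph.Term_Z'_decomp (Z := Z),
      NodalGraph.card_union4 (NodalGraph.ES_disjoint (by norm_num))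
        (NodalGraph.ES_disjoint (by norm_num)) (NodalGraph.ES_disjoint (by norm_num))
        (NodalGraph.ES_disjoint (by norm_num)) (NodalGraph.ES_disjoint (by norm_num))
        (NodalGraph.ES_disjoint (by norm_num))] at hkZ'
    exact hkZ'
  -- the trichotomy
  rcases (by omega :
      (G.ES Z Z' 1).card + (G.ES Z Z' 2).card + (G.ES Z Z' 3).card = 3 ∨
      ((G.ES Z Z' 1).card = 1 ∧ (G.ES Z Z' 2).card = 1 ∧ (G.ES Z Z' 3).card = 0) ∨
      ((G.ES Z Z' 7).card = 1 ∧ (G.ES Z Z' 11).card = 1 ∧ (G.ES Z Z' 3).card = 0))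
    with hgood | hbad | hbad3
  · -- GOOD case : the wedge is a 3-tail
    have hPcompl : G.ConnSub (Z ∩ Z')ᶜ := by
      rw [Finset.compl_inter]
      exact NodalGraph.connSub_union hZc hZ'c (Finset.mem_compl.mpr hbZ)
        (Finset.mem_compl.mpr hbZ')
    have hPconn : G.ConnSub (Z ∩ Z') := by
      have h12 : (G.ES Z Z' 1).card = 1 ∨ (G.ES Z Z' 2).card = 1 := by omega
      rcases h12 with h | h
      · obtain ⟨ea, hea⟩ := Finset.card_eq_one.mp h
        exact NodalGraph.P_conn_of_ES1 hZconn hea hγ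
      · obtain ⟨eb, heb⟩ := Finset.card_eq_one.mp h
        exact NodalGraph.P_conn_of_ES2 hZ'conn heb hγ
    refine ⟨⟨?_, hPconn, hPcompl⟩, ?_⟩
    · intro h
      exact hbZ (Finset.mem_inter.mp (h ▸ Finset.mem_univ G.base)).1
    · rw [NodalGraph.k, NodalGraph.Term_inter_decomp,
        NodalGraph.card_union3 (NodalGraph.ES_disjoint (by norm_num))
          (NodalGraph.ES_disjoint (by norm_num)) (NodalGraph.ES_disjoint (by norm_num))]
      exact hgood
  · -- BAD case (k_P = 2) : contradiction with the nested chain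
    exfalso
    obtain ⟨h1, h2', h3⟩ := hbad
    obtain ⟨ea, hea⟩ := Finset.card_eq_one.mp h1
    obtain ⟨eb, heb⟩ := Finset.card_eq_one.mp h2'
    have hE3 : G.ES Z Z' 3 = ∅ := Finset.card_eq_zero.mp h3
    have hTermP : G.Term (Z ∩ Z') = {ea, eb} := by
      rw [NodalGraph.Term_inter_decomp, hea, heb, hE3, Finset.union_empty]
      rfl
    have hne : ea ≠ eb := by
      intro h
      have m1 : ea ∈ G.ES Z Z' 1 := hea ▸ Finset.mem_singleton_self ea
      have m2 : ea ∈ G.ES Z Z' 2 := by rw [h, heb]; exact Finset.mem_singleton_self eb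
      exact Finset.disjoint_left.mp (NodalGraph.ES_disjoint (by norm_num)) m1 m2
    exact NodalGraph.chain_false h2 hfZ hfZ'
      (NodalGraph.P_conn_of_ES1 hZconn hea hγ)
      (by
        rw [Finset.compl_inter]
        exact NodalGraph.connSub_union hZc hZ'c (Finset.mem_compl.mpr hbZ)
          (Finset.mem_compl.mpr hbZ'))
      hTermP hne NodalGraph.Term_inter_subset hγ hγ'
      (fun h => hbZ (Finset.mem_inter.mp h).1)
  · -- BAD case (k_P = 4) : contradiction with the nested chain, via Z ∪ Z'
    exfalso
    obtain ⟨h7, h11, h3⟩ := hbad3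
    obtain ⟨eq', heq⟩ := Finset.card_eq_one.mp h7
    obtain ⟨er, her⟩ := Finset.card_eq_one.mp h11
    have hE3 : G.ES Z Z' 3 = ∅ := Finset.card_eq_zero.mp h3
    have hTermU : G.Term (Z ∪ Z') = {eq', er} := by
      rw [NodalGraph.Term_un_decomp, hE3, heq, her, Finset.empty_union]
      rfl
    have hne : eq' ≠ er := by
      intro h
      have m1 : eq' ∈ G.ES Z Z' 7 := heq ▸ Finset.mem_singleton_self eq'
      have m2 : eq' ∈ G.ES Z Z' 11 := by rw [h, her]; exact Finset.mem_singleton_self er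
      exact Finset.disjoint_left.mp (NodalGraph.ES_disjoint (by norm_num)) m1 m2
    exact NodalGraph.chain_false h2 hfZ hfZ'
      (NodalGraph.connSub_union hZconn hZ'conn hγZ hγZ')
      (NodalGraph.S_conn_of_ES11 hZc her hbZ hbZ' hρRZ hρRZ')
      hTermU hne NodalGraph.Term_union_subset
      (Finset.mem_union_left _ hγZ) (Finset.mem_union_left _ hγ'Z)
      (by rw [Finset.mem_union]; tauto)
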